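/- (Alzer–Kwong) For every positive integer m, every natural number ν with 0 ≤ ν ≤ m, and every rational x, one has ∑_{k=0, k+m odd}^{m-1} C(m,k)·C(k+m,ν)·B_{k+m−ν}(x) = (1/2)·∑_{j=0}^{m} (−1)^{j+m}·C(m,j)·C(j+m−1,ν)·(j+m)·x^{j+m−ν−1}, where the sum on the left runs only over those indices k in {0,…,m−1} for which k+m is odd. -/

import Mathlib

open Finset

lemma sum_choose_bernoulli_eval (x : ℚ) (s : ℕ) :
    ∑ i ∈ range (s+1), (s.choose i : ℚ) * (Polynomial.bernoulli i).eval x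
    = (Polynomial.bernoulli s).eval x + s * x^(s-1) := by
  cases s with
  | zero => simp
  | succ t =>
    have h := congrArg (Polynomial.eval x) (Polynomial.sum_bernoulli t)
    simp only [Polynomial.eval_finset_sum, Polynomial.eval_smul, Polynomial.eval_monomial,
      smul_eq_mul] at h
    rw [Finset.sum_range_succ, h]
    push_cast
    simp [Nat.choose_self]
    ring

lemma aux_inner (x : ℚ) (ν r : ℕ) (hνr : ν ≤ r) :
    ∑ n ∈ range (r+1), (r.choose n : ℚ) * ((n.choose ν : ℚ) * (Polynomial.bernoulli (n-ν)).eval x)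
    = (r.choose ν : ℚ) * ((Polynomial.bernoulli (r-ν)).eval x + (r-ν) * x^(r-ν-1)) := by
  have h0 : ∑ n ∈ range (r+1), (r.choose n : ℚ) * ((n.choose ν : ℚ) * (Polynomial.bernoulli (n-ν)).eval x)
      = ∑ n ∈ Ico ν (r+1), (r.choose n : ℚ) * ((n.choose ν : ℚ) * (Polynomial.bernoulli (n-ν)).eval x) := by
    rw [Finset.range_eq_Ico]
    refine (Finset.sum_subset (Finset.Ico_subset_Ico (Nat.zero_le ν) le_rfl) ?_).symm
    intro n hn hn2
    simp only [Finset.mem_Ico] at hn hn2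
    have : n < ν := by omega
    rw [Nat.choose_eq_zero_of_lt this]
    simp
  rw [h0, Finset.sum_Ico_eq_sum_range]
  have hlen : r + 1 - ν = (r - ν) + 1 := by omega
  rw [hlen]
  have key : ∀ i ∈ range ((r-ν)+1),
      (r.choose (ν+i) : ℚ) * (((ν+i).choose ν : ℚ) * (Polynomial.bernoulli (ν+i-ν)).eval x)
      = (r.choose ν : ℚ) * (((r-ν).choose i : ℚ) * (Polynomial.bernoulli i).eval x) := by
    intro i hi
    simp only [Finset.mem_range] at hi
    have h1 : ν + i ≤ r := by omega
    have h2 : r.choose (ν+i) * (ν+i).choose ν = r.choose ν * (r-ν).choose i := by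
      have := Nat.choose_mul (n := r) (Nat.le_add_right ν i)
      simpa using this
    have h3 : ν + i - ν = i := by omega
    rw [h3]
    have h4 : (r.choose (ν+i) : ℚ) * ((ν+i).choose ν : ℚ) = (r.choose ν : ℚ) * ((r-ν).choose i : ℚ) := by
      exact_mod_cast congrArg (fun n : ℕ => (n : ℚ)) h2
    rw [← mul_assoc, h4, mul_assoc]
  rw [Finset.sum_congr rfl key, ← Finset.mul_sum, sum_choose_bernoulli_eval]
  rw [Nat.cast_sub hνr]

lemma poly_id (m : ℕ) :
    ∑ k ∈ range (m+1), Polynomial.C ((m.choose k : ℚ)) * Polynomial.X^(m+k)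
    = ∑ j ∈ range (m+1), Polynomial.C ((-1:ℚ)^(m+j) * (m.choose j : ℚ)) * (Polynomial.X+1)^(m+j) := by
  have L : ∑ k ∈ range (m+1), Polynomial.C ((m.choose k : ℚ)) * Polynomial.X^(m+k)
      = Polynomial.X^m * (Polynomial.X+1)^m := by
    rw [add_pow, Finset.mul_sum]
    refine Finset.sum_congr rfl fun k hk => ?_
    simp [pow_add, Polynomial.C_eq_natCast]
    ring
  have R : ∑ j ∈ range (m+1), Polynomial.C ((-1:ℚ)^(m+j) * (m.choose j : ℚ)) * (Polynomial.X+1)^(m+j)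
      = Polynomial.X^m * (Polynomial.X+1)^m := by
    have hX : (Polynomial.X : Polynomial ℚ)^m = ((Polynomial.X+1) + (-1))^m := by ring_nf
    rw [hX, add_pow, Finset.sum_mul]
    refine Finset.sum_congr rfl fun j hj => ?_
    simp only [Finset.mem_range] at hj
    have hsign : (-1:ℚ)^(m+j) = (-1:ℚ)^(m-j) := by
      rw [show m+j = (m-j)+2*j by omega, pow_add, pow_mul]
      simp
    rw [hsign]
    simp [pow_add, Polynomial.C_eq_natCast, map_pow]
    ring
  rw [L, R]

theorem alzer_kwong (m : ℕ) (hm : 0 < m) (ν : ℕ) (hν : ν ≤ m) (x : ℚ) :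
    ∑ k ∈ (Finset.range m).filter (fun k => Odd (k + m)),
      (m.choose k : ℚ) * ((k + m).choose ν) * (Polynomial.bernoulli (k + m - ν)).eval x
    = (1 / 2) * ∑ j ∈ Finset.range (m + 1),
        (-1 : ℚ) ^ (j + m) * (m.choose j) * ((j + m - 1).choose ν) * (j + m) *
          x ^ (j + m - ν - 1) := by
  set c : ℕ → ℚ := fun n => (n.choose ν : ℚ) * (Polynomial.bernoulli (n - ν)).eval x with hc
  -- apply the functional p ↦ ∑ n < 2m+1, p.coeff n * c n to poly_id
  have hF := congrArg (fun p : Polynomial ℚ => ∑ n ∈ range (2*m+1), p.coeff n * c n) (poly_id m)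
  simp only [Polynomial.finset_sum_coeff, Polynomial.coeff_C_mul, Polynomial.coeff_X_pow,
    Polynomial.coeff_X_add_one_pow, Finset.sum_mul] at hF
  rw [Finset.sum_comm] at hF
  rw [show (∑ n ∈ range (2*m+1), ∑ j ∈ range (m+1),
      (-1:ℚ)^(m+j) * (m.choose j : ℚ) * ((m+j).choose n : ℚ) * c n) =
      ∑ j ∈ range (m+1), ∑ n ∈ range (2*m+1),
      (-1:ℚ)^(m+j) * (m.choose j : ℚ) * ((m+j).choose n : ℚ) * c n from Finset.sum_comm] at hF
  -- simplify LHS of hF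
  have hL : ∀ k ∈ range (m+1),
      (∑ n ∈ range (2*m+1), (m.choose k : ℚ) * (if n = m + k then 1 else 0) * c n)
      = (m.choose k : ℚ) * c (m+k) := by
    intro k hk
    simp only [Finset.mem_range] at hk
    rw [Finset.sum_congr rfl (fun n _ => by
      rw [mul_ite, mul_one, mul_zero, ite_mul, zero_mul])]
    rw [Finset.sum_ite_eq']
    simp only [Finset.mem_range, if_pos (by omega : m + k < 2*m+1)]
  -- simplify RHS of hF
  have hR : ∀ j ∈ range (m+1),
      (∑ n ∈ range (2*m+1), (-1:ℚ)^(m+j) * (m.choose j : ℚ) * ((m+j).choose n : ℚ) * c n)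
      = (-1:ℚ)^(m+j) * (m.choose j : ℚ) *
        (((m+j).choose ν : ℚ) * ((Polynomial.bernoulli (m+j-ν)).eval x + (m+j-ν) * x^(m+j-ν-1))) := by
    intro j hj
    simp only [Finset.mem_range] at hj
    have hsub : ∑ n ∈ range (2*m+1), ((m+j).choose n : ℚ) * c n
        = ∑ n ∈ range ((m+j)+1), ((m+j).choose n : ℚ) * c n := by
      refine (Finset.sum_subset (by
        apply Finset.range_subset_range.2; omega) ?_).symm
      intro n hn hn2
      simp only [Finset.mem_range] at hn hn2
      rw [Nat.choose_eq_zero_of_lt (by omega)]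
      simp
    calc ∑ n ∈ range (2*m+1), (-1:ℚ)^(m+j) * (m.choose j : ℚ) * ((m+j).choose n : ℚ) * c n
        = (-1:ℚ)^(m+j) * (m.choose j : ℚ) * ∑ n ∈ range (2*m+1), ((m+j).choose n : ℚ) * c n := by
          rw [Finset.mul_sum]; exact Finset.sum_congr rfl fun n _ => by ring
      _ = _ := by
          rw [hsub, hc]
          simp only []
          rw [aux_inner x ν (m+j) (by omega)]
          push_cast
          ring
  rw [Finset.sum_congr rfl hL, Finset.sum_congr rfl hR] at hF
  -- now hF : ∑ k, C(m,k) * c (m+k) = ∑ j, s j * (C(m+j,ν) * (B + (m+j-ν) x^e))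
  -- Goal manipulation
  rw [Finset.sum_filter]
  have hgoal2 : ∑ k ∈ range m, (if Odd (k+m) then
        (m.choose k : ℚ) * ((k + m).choose ν) * (Polynomial.bernoulli (k + m - ν)).eval x else 0)
      = (1/2) * (∑ k ∈ range (m+1), (m.choose k : ℚ) * c (m+k)
          - ∑ k ∈ range (m+1), (-1:ℚ)^(m+k) * (m.choose k : ℚ) * c (m+k)) := by
    rw [← Finset.sum_sub_distrib, Finset.mul_sum]
    rw [Finset.sum_range_succ]
    have hlast : (1:ℚ)/2 * ((m.choose m : ℚ) * c (m+m) - (-1:ℚ)^(m+m) * (m.choose m : ℚ) * c (m+m)) = 0 := by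
      have : (-1:ℚ)^(m+m) = 1 := by
        have : Even (m+m) := ⟨m, rfl⟩
        exact this.neg_one_pow
      rw [this]; ring
    rw [hlast, add_zero]
    refine Finset.sum_congr rfl fun k hk => ?_
    rcases Nat.even_or_odd (k+m) with he | ho
    · rw [if_neg (by simpa using he)]
      have : (-1:ℚ)^(m+k) = 1 := by
        have : Even (m+k) := by rwa [Nat.add_comm]
        exact this.neg_one_pow
      rw [this]; ring
    · rw [if_pos ho]
      have : (-1:ℚ)^(m+k) = -1 := by
        have : Odd (m+k) := by rwa [Nat.add_comm]
        exact this.neg_one_pow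
      rw [this, hc]
      simp only []
      rw [show m + k = k + m from Nat.add_comm m k]
      ring
  rw [hgoal2, hF]
  rw [← Finset.sum_sub_distrib]
  congr 1
  refine Finset.sum_congr rfl fun j hj => ?_
  simp only [Finset.mem_range] at hj
  rw [hc]
  simp only []
  have hch : ((m+j-1).choose ν : ℚ) * ((m:ℚ)+j) = ((m+j).choose ν : ℚ) * ((m:ℚ)+j-ν) := by
    have h2 := Nat.choose_mul_succ_eq (m+j-1) ν
    rw [show m+j-1+1 = m+j by omega] at h2
    have h3 : (((m+j-1).choose ν * (m+j) : ℕ) : ℚ) = (((m+j).choose ν * (m+j-ν) : ℕ) : ℚ) := by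
      exact_mod_cast congrArg (fun n : ℕ => (n:ℚ)) h2
    push_cast [Nat.cast_sub (show ν ≤ m+j by omega)] at h3
    linarith [h3]
  rw [Nat.add_comm j m]
  linear_combination (-((-1:ℚ)^(m+j) * (m.choose j:ℚ) * x^(m+j-ν-1))) * hch
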